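/- arXiv:2605.18247 — 2 statements merged into one kernel-verified Lean document; each statement's English description precedes it below -/
import Mathlib

section
/- Let Ω ⊆ ℝ³ be open, and let ρ : Ω → ℝ be smooth with ρ > 0 and η : Ω → ℝ smooth with values in (0, π). Set ρ₁ = ρ·cos²(η/2) and ρ₂ = ρ·sin²(η/2). Then Δ√ρ₂/√ρ₂ − Δ√ρ₁/√ρ₁ = ∇·(ρ·∇η)/(ρ·sin η) on Ω. Equivalently, with V_{qi} = −(ħ²/2m)·Δ√ρᵢ/√ρᵢ (ħ, m > 0), one has V_{q2} − V_{q1} = −(ħ²/2m)·∇·(ρ·∇η)/(ρ·sin η). -/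
open Real

noncomputable section

/-- Partial derivative of a scalar function on ℝ³ in the `i`-th coordinate direction. -/
noncomputable def pd (i : Fin 3) (f : (Fin 3 → ℝ) → ℝ) (x : Fin 3 → ℝ) : ℝ :=
  fderiv ℝ f x (Pi.single i 1)

/-- Euclidean Laplacian of a scalar function on ℝ³. -/
noncomputable def lap (f : (Fin 3 → ℝ) → ℝ) (x : Fin 3 → ℝ) : ℝ :=
  ∑ i, pd i (fun y => pd i f y) x

/-- Divergence of a vector field on ℝ³. -/
noncomputable def div3 (v : (Fin 3 → ℝ) → (Fin 3 → ℝ)) (x : Fin 3 → ℝ) : ℝ :=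
  ∑ i, pd i (fun y => v y i) x

lemma pd_congr {i : Fin 3} {f g : (Fin 3 → ℝ) → ℝ} {x : Fin 3 → ℝ}
    (h : f =ᶠ[nhds x] g) : pd i f x = pd i g x := by
  unfold pd; rw [h.fderiv_eq]

lemma pd_mul {i : Fin 3} {f g : (Fin 3 → ℝ) → ℝ} {x : Fin 3 → ℝ}
    (hf : DifferentiableAt ℝ f x) (hg : DifferentiableAt ℝ g x) :
    pd i (fun y => f y * g y) x = f x * pd i g x + g x * pd i f x := by
  unfold pd
  rw [fderiv_fun_mul hf hg]
  simp

lemma pd_const_mul {i : Fin 3} {f : (Fin 3 → ℝ) → ℝ} {x : Fin 3 → ℝ} (c : ℝ)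
    (hf : DifferentiableAt ℝ f x) :
    pd i (fun y => c * f y) x = c * pd i f x := by
  unfold pd
  rw [fderiv_const_mul hf]
  simp

lemma pd_sub {i : Fin 3} {f g : (Fin 3 → ℝ) → ℝ} {x : Fin 3 → ℝ}
    (hf : DifferentiableAt ℝ f x) (hg : DifferentiableAt ℝ g x) :
    pd i (fun y => f y - g y) x = pd i f x - pd i g x := by
  unfold pd
  rw [fderiv_fun_sub hf hg]
  simp

lemma pd_sqrt_one (Ω : Set (Fin 3 → ℝ)) (hΩ : IsOpen Ω)
    (ρ η : (Fin 3 → ℝ) → ℝ)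
    (hρ : ContDiffOn ℝ (⊤ : ℕ∞) ρ Ω) (hρpos : ∀ x ∈ Ω, 0 < ρ x)
    (hη : ContDiffOn ℝ (⊤ : ℕ∞) η Ω) (hηval : ∀ x ∈ Ω, η x ∈ Set.Ioo 0 π)
    (ρ₁ : (Fin 3 → ℝ) → ℝ)
    (hρ₁ : ρ₁ = fun y => ρ y * Real.cos (η y / 2) ^ 2) :
    ∀ y ∈ Ω, ∀ i,
      pd i (fun z => Real.sqrt (ρ₁ z)) y
        = Real.cos (η y / 2) / (2 * Real.sqrt (ρ y)) * pd i ρ y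
          - Real.sqrt (ρ y) * Real.sin (η y / 2) / 2 * pd i η y := by
  intro y hy i
  have hy' : Ω ∈ nhds y := hΩ.mem_nhds hy
  have hρd : DifferentiableAt ℝ ρ y := (hρ.contDiffAt hy').differentiableAt (by simp)
  have hηd : DifferentiableAt ℝ η y := (hη.contDiffAt hy').differentiableAt (by simp)
  have hπ := Real.pi_pos
  have hcos_pos : ∀ z ∈ Ω, 0 < Real.cos (η z / 2) := fun z hz => by
    have h := hηval z hz
    exact Real.cos_pos_of_mem_Ioo ⟨by simp only [Set.mem_Ioo] at h ⊢; linarith [h.1], by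
      simp only [Set.mem_Ioo] at h ⊢; linarith [h.2]⟩
  have hsym : Set.EqOn (fun z => Real.sqrt (ρ₁ z))
      (fun z => Real.sqrt (ρ z) * Real.cos (η z / 2)) Ω := by
    intro z hz
    simp only [hρ₁]
    rw [Real.sqrt_mul (hρpos z hz).le, Real.sqrt_sq (hcos_pos z hz).le]
  have h2 : HasFDerivAt (fun z => η z / 2) ((2⁻¹ : ℝ) • fderiv ℝ η y) y := by
    simpa [div_eq_mul_inv] using hηd.hasFDerivAt.mul_const (2⁻¹ : ℝ)
  have hcosd : HasFDerivAt (fun z => Real.cos (η z / 2))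
      (-Real.sin (η y / 2) • ((2⁻¹ : ℝ) • fderiv ℝ η y)) y := h2.cos
  have hsqd : HasFDerivAt (fun z => Real.sqrt (ρ z))
      ((1 / (2 * Real.sqrt (ρ y))) • fderiv ℝ ρ y) y :=
    hρd.hasFDerivAt.sqrt (ne_of_gt (hρpos y hy))
  have hud : HasFDerivAt (fun z => Real.sqrt (ρ₁ z))
      (Real.sqrt (ρ y) • (-Real.sin (η y / 2) • ((2⁻¹ : ℝ) • fderiv ℝ η y))
        + Real.cos (η y / 2) • ((1 / (2 * Real.sqrt (ρ y))) • fderiv ℝ ρ y)) y :=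
    (hsqd.mul hcosd).congr_of_eventuallyEq (Filter.eventuallyEq_of_mem hy' hsym)
  show fderiv ℝ (fun z => Real.sqrt (ρ₁ z)) y (Pi.single i 1) = _
  rw [hud.fderiv]
  simp only [ContinuousLinearMap.add_apply, ContinuousLinearMap.smul_apply, smul_eq_mul, pd]
  ring

lemma pd_sqrt_two (Ω : Set (Fin 3 → ℝ)) (hΩ : IsOpen Ω)
    (ρ η : (Fin 3 → ℝ) → ℝ)
    (hρ : ContDiffOn ℝ (⊤ : ℕ∞) ρ Ω) (hρpos : ∀ x ∈ Ω, 0 < ρ x)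
    (hη : ContDiffOn ℝ (⊤ : ℕ∞) η Ω) (hηval : ∀ x ∈ Ω, η x ∈ Set.Ioo 0 π)
    (ρ₂ : (Fin 3 → ℝ) → ℝ)
    (hρ₂ : ρ₂ = fun y => ρ y * Real.sin (η y / 2) ^ 2) :
    ∀ y ∈ Ω, ∀ i,
      pd i (fun z => Real.sqrt (ρ₂ z)) y
        = Real.sin (η y / 2) / (2 * Real.sqrt (ρ y)) * pd i ρ y
          + Real.sqrt (ρ y) * Real.cos (η y / 2) / 2 * pd i η y := by
  intro y hy i
  have hy' : Ω ∈ nhds y := hΩ.mem_nhds hy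
  have hρd : DifferentiableAt ℝ ρ y := (hρ.contDiffAt hy').differentiableAt (by simp)
  have hηd : DifferentiableAt ℝ η y := (hη.contDiffAt hy').differentiableAt (by simp)
  have hπ := Real.pi_pos
  have hsin_pos : ∀ z ∈ Ω, 0 < Real.sin (η z / 2) := fun z hz => by
    have h := hηval z hz
    simp only [Set.mem_Ioo] at h
    exact Real.sin_pos_of_pos_of_lt_pi (by linarith [h.1]) (by linarith [h.2])
  have hsym : Set.EqOn (fun z => Real.sqrt (ρ₂ z))
      (fun z => Real.sqrt (ρ z) * Real.sin (η z / 2)) Ω := by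
    intro z hz
    simp only [hρ₂]
    rw [Real.sqrt_mul (hρpos z hz).le, Real.sqrt_sq (hsin_pos z hz).le]
  have h2 : HasFDerivAt (fun z => η z / 2) ((2⁻¹ : ℝ) • fderiv ℝ η y) y := by
    simpa [div_eq_mul_inv] using hηd.hasFDerivAt.mul_const (2⁻¹ : ℝ)
  have hsind : HasFDerivAt (fun z => Real.sin (η z / 2))
      (Real.cos (η y / 2) • ((2⁻¹ : ℝ) • fderiv ℝ η y)) y := h2.sin
  have hsqd : HasFDerivAt (fun z => Real.sqrt (ρ z))
      ((1 / (2 * Real.sqrt (ρ y))) • fderiv ℝ ρ y) y :=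
    hρd.hasFDerivAt.sqrt (ne_of_gt (hρpos y hy))
  have hud : HasFDerivAt (fun z => Real.sqrt (ρ₂ z))
      (Real.sqrt (ρ y) • (Real.cos (η y / 2) • ((2⁻¹ : ℝ) • fderiv ℝ η y))
        + Real.sin (η y / 2) • ((1 / (2 * Real.sqrt (ρ y))) • fderiv ℝ ρ y)) y :=
    (hsqd.mul hsind).congr_of_eventuallyEq (Filter.eventuallyEq_of_mem hy' hsym)
  show fderiv ℝ (fun z => Real.sqrt (ρ₂ z)) y (Pi.single i 1) = _
  rw [hud.fderiv]
  simp only [ContinuousLinearMap.add_apply, ContinuousLinearMap.smul_apply, smul_eq_mul, pd]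
  ring

/-- key pointwise identity: `ρ ∇η = 2 (u ∇v - v ∇u)` on Ω. -/
lemma keyA (Ω : Set (Fin 3 → ℝ)) (hΩ : IsOpen Ω)
    (ρ η : (Fin 3 → ℝ) → ℝ)
    (hρ : ContDiffOn ℝ (⊤ : ℕ∞) ρ Ω) (hρpos : ∀ x ∈ Ω, 0 < ρ x)
    (hη : ContDiffOn ℝ (⊤ : ℕ∞) η Ω) (hηval : ∀ x ∈ Ω, η x ∈ Set.Ioo 0 π)
    (ρ₁ ρ₂ : (Fin 3 → ℝ) → ℝ)
    (hρ₁ : ρ₁ = fun y => ρ y * Real.cos (η y / 2) ^ 2)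
    (hρ₂ : ρ₂ = fun y => ρ y * Real.sin (η y / 2) ^ 2) :
    ∀ y ∈ Ω, ∀ i,
      ρ y * pd i η y
        = 2 * (Real.sqrt (ρ₁ y) * pd i (fun z => Real.sqrt (ρ₂ z)) y
            - Real.sqrt (ρ₂ y) * pd i (fun z => Real.sqrt (ρ₁ z)) y) := by
  intro y hy i
  have hπ := Real.pi_pos
  have h := hηval y hy
  simp only [Set.mem_Ioo] at h
  have hcpos : 0 < Real.cos (η y / 2) :=
    Real.cos_pos_of_mem_Ioo ⟨by linarith [h.1], by linarith [h.2]⟩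
  have hspos : 0 < Real.sin (η y / 2) :=
    Real.sin_pos_of_pos_of_lt_pi (by linarith [h.1]) (by linarith [h.2])
  have hfpos : 0 < Real.sqrt (ρ y) := Real.sqrt_pos.mpr (hρpos y hy)
  have hu_val : Real.sqrt (ρ₁ y) = Real.sqrt (ρ y) * Real.cos (η y / 2) := by
    rw [hρ₁, Real.sqrt_mul (hρpos y hy).le, Real.sqrt_sq hcpos.le]
  have hv_val : Real.sqrt (ρ₂ y) = Real.sqrt (ρ y) * Real.sin (η y / 2) := by
    rw [hρ₂, Real.sqrt_mul (hρpos y hy).le, Real.sqrt_sq hspos.le]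
  rw [hu_val, hv_val,
    pd_sqrt_one Ω hΩ ρ η hρ hρpos hη hηval ρ₁ hρ₁ y hy i,
    pd_sqrt_two Ω hΩ ρ η hρ hρpos hη hηval ρ₂ hρ₂ y hy i]
  have hρval : Real.sqrt (ρ y) ^ 2 = ρ y := Real.sq_sqrt (hρpos y hy).le
  have hsc : Real.sin (η y / 2) ^ 2 + Real.cos (η y / 2) ^ 2 = 1 :=
    Real.sin_sq_add_cos_sq _
  rw [← hρval]
  field_simp
  rw [Real.sqrt_sq hfpos.le]
  linear_combination (-(Real.sqrt (ρ y) ^ 2 * pd i η y)) * hsc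

/-- **Difference of the two quantum potentials.**
With `ρ₁ = ρ cos²(η/2)` and `ρ₂ = ρ sin²(η/2)` one has, on Ω,
`Δ√ρ₂/√ρ₂ - Δ√ρ₁/√ρ₁ = ∇·(ρ∇η)/(ρ sin η)`, and equivalently, with
`V_{qi} = -(ħ²/2m) Δ√ρᵢ/√ρᵢ`,
`V_{q2} - V_{q1} = -(ħ²/2m) ∇·(ρ∇η)/(ρ sin η)`. -/
theorem quantum_potential_difference
    (Ω : Set (Fin 3 → ℝ)) (hΩ : IsOpen Ω)
    (ρ η : (Fin 3 → ℝ) → ℝ)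
    (hρ : ContDiffOn ℝ (⊤ : ℕ∞) ρ Ω) (hρpos : ∀ x ∈ Ω, 0 < ρ x)
    (hη : ContDiffOn ℝ (⊤ : ℕ∞) η Ω) (hηval : ∀ x ∈ Ω, η x ∈ Set.Ioo 0 π)
    (hbar m : ℝ) (hhbar : 0 < hbar) (hm : 0 < m)
    (ρ₁ ρ₂ : (Fin 3 → ℝ) → ℝ)
    (hρ₁ : ρ₁ = fun y => ρ y * Real.cos (η y / 2) ^ 2)
    (hρ₂ : ρ₂ = fun y => ρ y * Real.sin (η y / 2) ^ 2) :
    ∀ x ∈ Ω,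
      (lap (fun y => Real.sqrt (ρ₂ y)) x / Real.sqrt (ρ₂ x)
          - lap (fun y => Real.sqrt (ρ₁ y)) x / Real.sqrt (ρ₁ x)
        = div3 (fun y i => ρ y * pd i η y) x / (ρ x * Real.sin (η x))) ∧
      ((-(hbar ^ 2 / (2 * m)) * lap (fun y => Real.sqrt (ρ₂ y)) x / Real.sqrt (ρ₂ x))
          - (-(hbar ^ 2 / (2 * m)) * lap (fun y => Real.sqrt (ρ₁ y)) x / Real.sqrt (ρ₁ x))
        = -(hbar ^ 2 / (2 * m)) * div3 (fun y i => ρ y * pd i η y) x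
            / (ρ x * Real.sin (η x))) := by
  intro x hx
  have hx' : Ω ∈ nhds x := hΩ.mem_nhds hx
  have hπ := Real.pi_pos
  have h := hηval x hx
  simp only [Set.mem_Ioo] at h
  have hcpos : 0 < Real.cos (η x / 2) :=
    Real.cos_pos_of_mem_Ioo ⟨by linarith [h.1], by linarith [h.2]⟩
  have hspos : 0 < Real.sin (η x / 2) :=
    Real.sin_pos_of_pos_of_lt_pi (by linarith [h.1]) (by linarith [h.2])
  have hfpos : 0 < Real.sqrt (ρ x) := Real.sqrt_pos.mpr (hρpos x hx)
  -- smoothness of ρ₁, ρ₂ on Ω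
  have hcos_pos : ∀ z ∈ Ω, 0 < Real.cos (η z / 2) := fun z hz => by
    have h := hηval z hz
    simp only [Set.mem_Ioo] at h
    exact Real.cos_pos_of_mem_Ioo ⟨by linarith [h.1], by linarith [h.2]⟩
  have hsin_pos : ∀ z ∈ Ω, 0 < Real.sin (η z / 2) := fun z hz => by
    have h := hηval z hz
    simp only [Set.mem_Ioo] at h
    exact Real.sin_pos_of_pos_of_lt_pi (by linarith [h.1]) (by linarith [h.2])
  have hη2 : ContDiffOn ℝ (⊤ : ℕ∞) (fun y => η y / 2) Ω := hη.div_const 2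
  have hρ₁s : ContDiffOn ℝ (⊤ : ℕ∞) ρ₁ Ω := by
    rw [hρ₁]
    exact hρ.mul ((Real.contDiff_cos.comp_contDiffOn hη2).pow 2)
  have hρ₂s : ContDiffOn ℝ (⊤ : ℕ∞) ρ₂ Ω := by
    rw [hρ₂]
    exact hρ.mul ((Real.contDiff_sin.comp_contDiffOn hη2).pow 2)
  have hρ₁pos : ∀ z ∈ Ω, 0 < ρ₁ z := fun z hz => by
    rw [hρ₁]; exact mul_pos (hρpos z hz) (pow_pos (hcos_pos z hz) 2)
  have hρ₂pos : ∀ z ∈ Ω, 0 < ρ₂ z := fun z hz => by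
    rw [hρ₂]; exact mul_pos (hρpos z hz) (pow_pos (hsin_pos z hz) 2)
  have huC : ContDiffAt ℝ (⊤ : ℕ∞) (fun y => Real.sqrt (ρ₁ y)) x :=
    (hρ₁s.contDiffAt hx').sqrt (ne_of_gt (hρ₁pos x hx))
  have hvC : ContDiffAt ℝ (⊤ : ℕ∞) (fun y => Real.sqrt (ρ₂ y)) x :=
    (hρ₂s.contDiffAt hx').sqrt (ne_of_gt (hρ₂pos x hx))
  have hud : DifferentiableAt ℝ (fun y => Real.sqrt (ρ₁ y)) x :=
    huC.differentiableAt (by simp)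
  have hvd : DifferentiableAt ℝ (fun y => Real.sqrt (ρ₂ y)) x :=
    hvC.differentiableAt (by simp)
  have htop : ((⊤ : ℕ∞) : WithTop ℕ∞) + 1 ≤ ((⊤ : ℕ∞) : WithTop ℕ∞) := by
    simp
  have hpdud : ∀ i : Fin 3,
      DifferentiableAt ℝ (fun y => pd i (fun z => Real.sqrt (ρ₁ z)) y) x := by
    intro i
    have h1 : ContDiffAt ℝ (⊤ : ℕ∞) (fderiv ℝ (fun z => Real.sqrt (ρ₁ z))) x :=
      huC.fderiv_right htop
    exact (h1.differentiableAt (by simp)).clm_apply (differentiableAt_const _)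
  have hpdvd : ∀ i : Fin 3,
      DifferentiableAt ℝ (fun y => pd i (fun z => Real.sqrt (ρ₂ z)) y) x := by
    intro i
    have h1 : ContDiffAt ℝ (⊤ : ℕ∞) (fderiv ℝ (fun z => Real.sqrt (ρ₂ z))) x :=
      hvC.fderiv_right htop
    exact (h1.differentiableAt (by simp)).clm_apply (differentiableAt_const _)
  have hA := keyA Ω hΩ ρ η hρ hρpos hη hηval ρ₁ ρ₂ hρ₁ hρ₂
  -- divergence computation
  have hstep : ∀ i : Fin 3,
      pd i (fun y => ρ y * pd i η y) x
        = 2 * (Real.sqrt (ρ₁ x) * pd i (fun y => pd i (fun z => Real.sqrt (ρ₂ z)) y) x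
            - Real.sqrt (ρ₂ x) * pd i (fun y => pd i (fun z => Real.sqrt (ρ₁ z)) y) x) := by
    intro i
    have e1 : (fun y => ρ y * pd i η y)
        =ᶠ[nhds x] (fun y => 2 * (Real.sqrt (ρ₁ y) * pd i (fun z => Real.sqrt (ρ₂ z)) y
            - Real.sqrt (ρ₂ y) * pd i (fun z => Real.sqrt (ρ₁ z)) y)) :=
      Filter.eventuallyEq_of_mem hx' (fun y hy => hA y hy i)
    rw [pd_congr e1,
      pd_const_mul 2 (((hud.fun_mul (hpdvd i)).fun_sub (hvd.fun_mul (hpdud i)))),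
      pd_sub (hud.fun_mul (hpdvd i)) (hvd.fun_mul (hpdud i)),
      pd_mul hud (hpdvd i), pd_mul hvd (hpdud i)]
    ring
  have hdiv : div3 (fun y i => ρ y * pd i η y) x
      = 2 * (Real.sqrt (ρ₁ x) * lap (fun y => Real.sqrt (ρ₂ y)) x
          - Real.sqrt (ρ₂ x) * lap (fun y => Real.sqrt (ρ₁ y)) x) := by
    simp only [div3, lap]
    rw [Fin.sum_univ_three, Fin.sum_univ_three, Fin.sum_univ_three,
      hstep 0, hstep 1, hstep 2]
    ring
  -- values at x
  have hu_val : Real.sqrt (ρ₁ x) = Real.sqrt (ρ x) * Real.cos (η x / 2) := by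
    rw [hρ₁, Real.sqrt_mul (hρpos x hx).le, Real.sqrt_sq hcpos.le]
  have hv_val : Real.sqrt (ρ₂ x) = Real.sqrt (ρ x) * Real.sin (η x / 2) := by
    rw [hρ₂, Real.sqrt_mul (hρpos x hx).le, Real.sqrt_sq hspos.le]
  have hsin_eta : Real.sin (η x) = 2 * Real.sin (η x / 2) * Real.cos (η x / 2) := by
    have : η x = 2 * (η x / 2) := by ring
    rw [this, Real.sin_two_mul]
    ring_nf
  have hρval : Real.sqrt (ρ x) ^ 2 = ρ x := Real.sq_sqrt (hρpos x hx).le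
  have h1 : lap (fun y => Real.sqrt (ρ₂ y)) x / Real.sqrt (ρ₂ x)
      - lap (fun y => Real.sqrt (ρ₁ y)) x / Real.sqrt (ρ₁ x)
      = div3 (fun y i => ρ y * pd i η y) x / (ρ x * Real.sin (η x)) := by
    rw [hdiv, hu_val, hv_val, hsin_eta, ← hρval]
    have hf0 : Real.sqrt (ρ x) ≠ 0 := ne_of_gt hfpos
    have hc0 : Real.cos (η x / 2) ≠ 0 := ne_of_gt hcpos
    have hs0 : Real.sin (η x / 2) ≠ 0 := ne_of_gt hspos
    field_simp
    rw [Real.sqrt_sq hfpos.le]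
  refine ⟨h1, ?_⟩
  linear_combination (-(hbar ^ 2 / (2 * m))) * h1

end
end

section
/- Let Ω ⊆ ℝ³ be open, let ρ₁, ρ₂, θ₁, θ₂ : Ω × ℝ → ℝ be smooth with ρ₁, ρ₂ > 0, let A : Ω × ℝ → ℝ³ and Φ, B¹, B², B³ : Ω × ℝ → ℝ be smooth, and let m, ħ, q be constants with m, ħ > 0. Set φ = (θ₂ − θ₁)/ħ, ρ = ρ₁ + ρ₂, u = (ρ₁∇θ₁ + ρ₂∇θ₂)/(mρ) − (q/m)A, V_{qi} = −(ħ²/2m)·Δ√ρᵢ/√ρᵢ, and let η : Ω × ℝ → (0, π) satisfy ρ₁ = ρ·cos²(η/2), ρ₂ = ρ·sin²(η/2). Assume the phase equations ∂ₜθ₁ = −V_{q1} − (1/2m)|∇θ₁ − qA|² − qΦ + (qħ/2m)·[B³ + √(ρ₂/ρ₁)(B¹ cos φ + B² sin φ)] and ∂ₜθ₂ = −V_{q2} − (1/2m)|∇θ₂ − qA|² − qΦ + (qħ/2m)·[−B³ + √(ρ₁/ρ₂)(B¹ cos φ + B² sin φ)]. Then ∂ₜφ + u·∇φ = (ħ/(2mρ·sin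 η))·∇·(ρ∇η) − (ħ/2m)·cos η·|∇φ|² + (q/m)·[−B³ + cot η·(B¹ cos φ + B² sin φ)]. -/
open Real

noncomputable section

/-- Space-time point: a point of ℝ³ together with a time. -/
abbrev P3 := (Fin 3 → ℝ) × ℝ

/-- Spatial partial derivative in the `i`-th coordinate direction. -/
noncomputable def pdx (i : Fin 3) (f : P3 → ℝ) (p : P3) : ℝ :=
  fderiv ℝ (fun x => f (x, p.2)) p.1 (Pi.single i 1)

/-- Time derivative. -/
noncomputable def pdt (f : P3 → ℝ) (p : P3) : ℝ :=
  deriv (fun t => f (p.1, t)) p.2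

/-- Spatial divergence of a time-dependent vector field. -/
noncomputable def divx (v : P3 → Fin 3 → ℝ) (p : P3) : ℝ :=
  ∑ i, pdx i (fun y => v y i) p

/-- Spatial Laplacian of a time-dependent scalar field. -/
noncomputable def lapx (f : P3 → ℝ) (p : P3) : ℝ :=
  ∑ i, pdx i (fun y => pdx i f y) p

section Helpers

variable {f g : P3 → ℝ} {p : P3}

lemma hasFDerivAt_slice (hf : DifferentiableAt ℝ f p) :
    HasFDerivAt (fun x => f (x, p.2))
      ((fderiv ℝ f p).comp (ContinuousLinearMap.inl ℝ (Fin 3 → ℝ) ℝ)) p.1 := by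
  have hg := hasFDerivAt_prodMk_left (𝕜 := ℝ) p.1 p.2
  have h := hf.hasFDerivAt
  rw [show p = (p.1, p.2) from rfl] at h
  exact h.comp p.1 hg

lemma diff_slice (hf : DifferentiableAt ℝ f p) :
    DifferentiableAt ℝ (fun x => f (x, p.2)) p.1 :=
  (hasFDerivAt_slice hf).differentiableAt

lemma diff_sliceT (hf : DifferentiableAt ℝ f p) :
    DifferentiableAt ℝ (fun t => f (p.1, t)) p.2 := by
  have hg := hasFDerivAt_prodMk_right (𝕜 := ℝ) p.1 p.2
  have h := hf.hasFDerivAt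
  rw [show p = (p.1, p.2) from rfl] at h
  exact (h.comp p.2 hg).differentiableAt

lemma pdx_eq_fderiv (hf : DifferentiableAt ℝ f p) (i : Fin 3) :
    pdx i f p = fderiv ℝ f p (Pi.single i 1, 0) := by
  rw [pdx, (hasFDerivAt_slice hf).fderiv]
  rfl

lemma diffAt_of_contDiffOn {S : Set P3} (hS : IsOpen S) (hf : ContDiffOn ℝ (⊤ : ℕ∞) f S)
    (hp : p ∈ S) : DifferentiableAt ℝ f p :=
  (hf.differentiableOn (by simp)).differentiableAt (hS.mem_nhds hp)

lemma pdx_congr {S : Set P3} (hS : IsOpen S) (hfg : Set.EqOn f g S) (hp : p ∈ S) (i : Fin 3) :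
    pdx i f p = pdx i g p := by
  have hc : Continuous (fun x : Fin 3 → ℝ => ((x, p.2) : P3)) := by continuity
  have hS' : IsOpen {x : Fin 3 → ℝ | ((x, p.2) : P3) ∈ S} := hS.preimage hc
  have hmem : p.1 ∈ {x : Fin 3 → ℝ | ((x, p.2) : P3) ∈ S} := by
    simpa using hp
  have : fderiv ℝ (fun x => f (x, p.2)) p.1 = fderiv ℝ (fun x => g (x, p.2)) p.1 := by
    apply Filter.EventuallyEq.fderiv_eq
    filter_upwards [hS'.mem_nhds hmem] with x hx using hfg hx
  simp only [pdx, this]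

lemma pdx_add (hf : DifferentiableAt ℝ f p) (hg : DifferentiableAt ℝ g p) (i : Fin 3) :
    pdx i (fun y => f y + g y) p = pdx i f p + pdx i g p := by
  simp only [pdx]
  rw [fderiv_fun_add (diff_slice hf) (diff_slice hg)]
  rfl

lemma pdx_sub (hf : DifferentiableAt ℝ f p) (hg : DifferentiableAt ℝ g p) (i : Fin 3) :
    pdx i (fun y => f y - g y) p = pdx i f p - pdx i g p := by
  simp only [pdx]
  rw [fderiv_fun_sub (diff_slice hf) (diff_slice hg)]
  rfl

lemma pdx_const_add (c : ℝ) (hf : DifferentiableAt ℝ f p) (i : Fin 3) :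
    pdx i (fun y => c + f y) p = pdx i f p := by
  simp only [pdx]
  rw [fderiv_const_add]

lemma pdx_const_mul (c : ℝ) (hf : DifferentiableAt ℝ f p) (i : Fin 3) :
    pdx i (fun y => c * f y) p = c * pdx i f p := by
  simp only [pdx]
  rw [fderiv_const_mul (diff_slice hf)]
  rfl

lemma pdx_div_const (hf : DifferentiableAt ℝ f p) (c : ℝ) (i : Fin 3) :
    pdx i (fun y => f y / c) p = pdx i f p / c := by
  simp only [pdx, div_eq_mul_inv]
  rw [fderiv_mul_const (diff_slice hf)]
  simp [mul_comm, div_eq_mul_inv]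

lemma pdx_mul (hf : DifferentiableAt ℝ f p) (hg : DifferentiableAt ℝ g p) (i : Fin 3) :
    pdx i (fun y => f y * g y) p = f p * pdx i g p + g p * pdx i f p := by
  simp only [pdx]
  rw [fderiv_fun_mul (diff_slice hf) (diff_slice hg)]
  rfl

lemma pdx_sqrt (hf : DifferentiableAt ℝ f p) (hfp : f p ≠ 0) (i : Fin 3) :
    pdx i (fun y => Real.sqrt (f y)) p = pdx i f p / (2 * Real.sqrt (f p)) := by
  have h1 : HasDerivAt Real.sqrt (1 / (2 * Real.sqrt (f p))) ((fun x => f (x, p.2)) p.1) := by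
    exact Real.hasDerivAt_sqrt hfp
  have h2 := h1.comp_hasFDerivAt p.1 (diff_slice hf).hasFDerivAt
  have h3 : pdx i (fun y => Real.sqrt (f y)) p
      = ((1 / (2 * Real.sqrt (f p))) • fderiv ℝ (fun x => f (x, p.2)) p.1) (Pi.single i 1) := by
    rw [pdx, show (fun x => Real.sqrt (f (x, p.2))) = Real.sqrt ∘ (fun x => f (x, p.2)) from rfl,
      h2.fderiv]
  rw [h3]
  simp only [ContinuousLinearMap.coe_smul', Pi.smul_apply, smul_eq_mul]
  rw [← pdx]
  field_simp

lemma pdx_cos (hf : DifferentiableAt ℝ f p) (i : Fin 3) :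
    pdx i (fun y => Real.cos (f y)) p = -Real.sin (f p) * pdx i f p := by
  have h1 : HasDerivAt Real.cos (-Real.sin (f p)) ((fun x => f (x, p.2)) p.1) :=
    Real.hasDerivAt_cos _
  have h2 := h1.comp_hasFDerivAt p.1 (diff_slice hf).hasFDerivAt
  have h3 : pdx i (fun y => Real.cos (f y)) p
      = ((-Real.sin (f p)) • fderiv ℝ (fun x => f (x, p.2)) p.1) (Pi.single i 1) := by
    rw [pdx, show (fun x => Real.cos (f (x, p.2))) = Real.cos ∘ (fun x => f (x, p.2)) from rfl,
      h2.fderiv]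
  rw [h3]
  simp only [ContinuousLinearMap.coe_smul', Pi.smul_apply, smul_eq_mul]
  rw [← pdx]

lemma pdx_smooth {S : Set P3} (hS : IsOpen S) (hf : ContDiffOn ℝ (⊤ : ℕ∞) f S) (i : Fin 3) :
    ContDiffOn ℝ (⊤ : ℕ∞) (fun y => pdx i f y) S := by
  have h1 : ContDiffOn ℝ (⊤ : ℕ∞) (fderiv ℝ f) S := hf.fderiv_of_isOpen hS (le_of_eq rfl)
  have h2 : ContDiffOn ℝ (⊤ : ℕ∞) (fun y => fderiv ℝ f y ((Pi.single i 1 : Fin 3 → ℝ), (0:ℝ))) S :=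
    h1.clm_apply contDiffOn_const
  exact h2.congr fun y hy => pdx_eq_fderiv (diffAt_of_contDiffOn hS hf hy) i

lemma pdt_sub_div (hf : DifferentiableAt ℝ f p) (hg : DifferentiableAt ℝ g p) (c : ℝ) :
    pdt (fun y => (f y - g y)/c) p = (pdt f p - pdt g p)/c := by
  simp only [pdt]
  rw [deriv_div_const, deriv_fun_sub (diff_sliceT hf) (diff_sliceT hg)]

end Helpers

set_option maxHeartbeats 1000000 in
/-- **Evolution equation for the relative phase φ.**
From the real (Hamilton–Jacobi-type) parts of the Pauli equation for the polar
components `Ψᵢ = √ρᵢ e^{iθᵢ/ħ}`, the relative phase `φ = (θ₂ - θ₁)/ħ` satisfies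
`∂ₜφ + u·∇φ = (ħ/(2mρ sin η)) ∇·(ρ∇η) - (ħ/2m) cos η |∇φ|²
+ (q/m)[-B³ + cot η (B¹ cos φ + B² sin φ)]`. -/
theorem phi_evolution
    (Ω : Set (Fin 3 → ℝ)) (hΩ : IsOpen Ω)
    (ρ₁ ρ₂ θ₁ θ₂ : P3 → ℝ) (A : P3 → Fin 3 → ℝ) (Φ B1 B2 B3 : P3 → ℝ)
    (m hbar q : ℝ) (hm : 0 < m) (hhbar : 0 < hbar)
    (hρ₁s : ContDiffOn ℝ (⊤ : ℕ∞) ρ₁ (Ω ×ˢ Set.univ))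
    (hρ₂s : ContDiffOn ℝ (⊤ : ℕ∞) ρ₂ (Ω ×ˢ Set.univ))
    (hθ₁s : ContDiffOn ℝ (⊤ : ℕ∞) θ₁ (Ω ×ˢ Set.univ))
    (hθ₂s : ContDiffOn ℝ (⊤ : ℕ∞) θ₂ (Ω ×ˢ Set.univ))
    (hAs : ContDiffOn ℝ (⊤ : ℕ∞) A (Ω ×ˢ Set.univ))
    (hΦs : ContDiffOn ℝ (⊤ : ℕ∞) Φ (Ω ×ˢ Set.univ))
    (hB1s : ContDiffOn ℝ (⊤ : ℕ∞) B1 (Ω ×ˢ Set.univ))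
    (hB2s : ContDiffOn ℝ (⊤ : ℕ∞) B2 (Ω ×ˢ Set.univ))
    (hB3s : ContDiffOn ℝ (⊤ : ℕ∞) B3 (Ω ×ˢ Set.univ))
    (hρ₁pos : ∀ p ∈ Ω ×ˢ (Set.univ : Set ℝ), 0 < ρ₁ p)
    (hρ₂pos : ∀ p ∈ Ω ×ˢ (Set.univ : Set ℝ), 0 < ρ₂ p)
    (φ : P3 → ℝ) (hφ : φ = fun p => (θ₂ p - θ₁ p) / hbar)
    (ρ : P3 → ℝ) (hρ : ρ = fun p => ρ₁ p + ρ₂ p)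
    (u : P3 → Fin 3 → ℝ)
    (hu : u = fun p i =>
      (ρ₁ p * pdx i θ₁ p + ρ₂ p * pdx i θ₂ p) / (m * ρ p) - q / m * A p i)
    (Vq1 Vq2 : P3 → ℝ)
    (hVq1 : Vq1 = fun p =>
      -(hbar ^ 2 / (2 * m)) * lapx (fun y => Real.sqrt (ρ₁ y)) p / Real.sqrt (ρ₁ p))
    (hVq2 : Vq2 = fun p =>
      -(hbar ^ 2 / (2 * m)) * lapx (fun y => Real.sqrt (ρ₂ y)) p / Real.sqrt (ρ₂ p))
    (η : P3 → ℝ)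
    (hηs : ContDiffOn ℝ (⊤ : ℕ∞) η (Ω ×ˢ Set.univ))
    (hηval : ∀ p ∈ Ω ×ˢ (Set.univ : Set ℝ), η p ∈ Set.Ioo 0 π)
    (hη₁ : ∀ p ∈ Ω ×ˢ (Set.univ : Set ℝ), ρ₁ p = ρ p * Real.cos (η p / 2) ^ 2)
    (hη₂ : ∀ p ∈ Ω ×ˢ (Set.univ : Set ℝ), ρ₂ p = ρ p * Real.sin (η p / 2) ^ 2)
    (h1 : ∀ p ∈ Ω ×ˢ (Set.univ : Set ℝ),
      pdt θ₁ p = -Vq1 p - (1 / (2 * m)) * (∑ i, (pdx i θ₁ p - q * A p i) ^ 2)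
        - q * Φ p
        + q * hbar / (2 * m)
          * (B3 p + Real.sqrt (ρ₂ p / ρ₁ p)
              * (B1 p * Real.cos (φ p) + B2 p * Real.sin (φ p))))
    (h2 : ∀ p ∈ Ω ×ˢ (Set.univ : Set ℝ),
      pdt θ₂ p = -Vq2 p - (1 / (2 * m)) * (∑ i, (pdx i θ₂ p - q * A p i) ^ 2)
        - q * Φ p
        + q * hbar / (2 * m)
          * (-B3 p + Real.sqrt (ρ₁ p / ρ₂ p)
              * (B1 p * Real.cos (φ p) + B2 p * Real.sin (φ p)))) :
    ∀ p ∈ Ω ×ˢ (Set.univ : Set ℝ),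
      pdt φ p + (∑ i, u p i * pdx i φ p)
        = hbar / (2 * m * ρ p * Real.sin (η p)) * divx (fun y i => ρ y * pdx i η y) p
          - hbar / (2 * m) * Real.cos (η p) * (∑ i, (pdx i φ p) ^ 2)
          + q / m * (-B3 p + Real.cos (η p) / Real.sin (η p)
              * (B1 p * Real.cos (φ p) + B2 p * Real.sin (φ p))) := by
  intro p hp
  have hSopen : IsOpen (Ω ×ˢ (Set.univ : Set ℝ)) := hΩ.prod isOpen_univ
  set S : Set P3 := Ω ×ˢ (Set.univ : Set ℝ) with hSdef
  have hmne : m ≠ 0 := ne_of_gt hm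
  have hbne : hbar ≠ 0 := ne_of_gt hhbar
  have hρpos : ∀ y ∈ S, 0 < ρ y := fun y hy => by
    rw [hρ]; exact add_pos (hρ₁pos y hy) (hρ₂pos y hy)
  have hsinpos : ∀ y ∈ S, 0 < Real.sin (η y) := fun y hy =>
    Real.sin_pos_of_pos_of_lt_pi (hηval y hy).1 (hηval y hy).2
  -- smoothness of derived functions
  have hρs : ContDiffOn ℝ (⊤ : ℕ∞) ρ S := by rw [hρ]; exact hρ₁s.add hρ₂s
  have hR₁s : ContDiffOn ℝ (⊤ : ℕ∞) (fun y => Real.sqrt (ρ₁ y)) S :=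
    hρ₁s.sqrt fun y hy => (hρ₁pos y hy).ne'
  have hR₂s : ContDiffOn ℝ (⊤ : ℕ∞) (fun y => Real.sqrt (ρ₂ y)) S :=
    hρ₂s.sqrt fun y hy => (hρ₂pos y hy).ne'
  -- half-angle rewriting of the constraint
  have hcos2 : ∀ x : ℝ, Real.cos (x / 2) ^ 2 = 1 / 2 + Real.cos x / 2 := fun x => by
    have h : 2 * (x / 2) = x := by ring
    rw [Real.cos_sq, h]
  have hsin2 : ∀ x : ℝ, Real.sin (x / 2) ^ 2 = 1 / 2 - Real.cos x / 2 := fun x => by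
    rw [Real.sin_sq, hcos2 x]; ring
  have hρ₁eq : Set.EqOn ρ₁ (fun y => ρ y * (1 / 2 + Real.cos (η y) / 2)) S := fun y hy => by
    rw [hη₁ y hy, hcos2 (η y)]
  have hρ₂val : ∀ y ∈ S, ρ₂ y = ρ y - ρ₁ y := fun y hy => by rw [hρ]; ring
  -- F1 : ρ₁ - ρ₂ = ρ cos η
  have hF1 : ∀ y ∈ S, ρ₁ y - ρ₂ y = ρ y * Real.cos (η y) := fun y hy => by
    rw [hη₁ y hy, hη₂ y hy, hcos2 (η y), hsin2 (η y)]; ring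
  -- F2 : √ρ₁ √ρ₂ = ρ sin η / 2
  have hF2 : ∀ y ∈ S, Real.sqrt (ρ₁ y) * Real.sqrt (ρ₂ y) = ρ y * Real.sin (η y) / 2 := by
    intro y hy
    have h1 : (0:ℝ) ≤ Real.sqrt (ρ₁ y) * Real.sqrt (ρ₂ y) :=
      mul_nonneg (Real.sqrt_nonneg _) (Real.sqrt_nonneg _)
    have h2 : (0:ℝ) ≤ ρ y * Real.sin (η y) / 2 := by
      have := hρpos y hy; have := hsinpos y hy; positivity
    have e1 : Real.sqrt (ρ₁ y) ^ 2 = ρ₁ y := Real.sq_sqrt (hρ₁pos y hy).le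
    have e2 : Real.sqrt (ρ₂ y) ^ 2 = ρ₂ y := Real.sq_sqrt (hρ₂pos y hy).le
    have hdbl : Real.sin (η y) = 2 * Real.sin (η y / 2) * Real.cos (η y / 2) := by
      have := Real.sin_two_mul (η y / 2)
      rw [show 2 * (η y / 2) = η y by ring] at this
      linarith
    have hsq : (Real.sqrt (ρ₁ y) * Real.sqrt (ρ₂ y)) ^ 2 = (ρ y * Real.sin (η y) / 2) ^ 2 := by
      rw [mul_pow, e1, e2, hη₁ y hy, hη₂ y hy, hdbl]; ring
    calc Real.sqrt (ρ₁ y) * Real.sqrt (ρ₂ y)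
        = Real.sqrt ((Real.sqrt (ρ₁ y) * Real.sqrt (ρ₂ y)) ^ 2) := (Real.sqrt_sq h1).symm
      _ = Real.sqrt ((ρ y * Real.sin (η y) / 2) ^ 2) := by rw [hsq]
      _ = ρ y * Real.sin (η y) / 2 := Real.sqrt_sq h2
  -- derivative of ρ splits
  have hdρ : ∀ y ∈ S, ∀ i, pdx i ρ y = pdx i ρ₁ y + pdx i ρ₂ y := fun y hy i => by
    rw [hρ]
    exact pdx_add (diffAt_of_contDiffOn hSopen hρ₁s hy) (diffAt_of_contDiffOn hSopen hρ₂s hy) i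
  -- derivative of √ρᵢ
  have hdR₁ : ∀ y ∈ S, ∀ i, pdx i (fun y' => Real.sqrt (ρ₁ y')) y
      = pdx i ρ₁ y / (2 * Real.sqrt (ρ₁ y)) := fun y hy i =>
    pdx_sqrt (diffAt_of_contDiffOn hSopen hρ₁s hy) (hρ₁pos y hy).ne' i
  have hdR₂ : ∀ y ∈ S, ∀ i, pdx i (fun y' => Real.sqrt (ρ₂ y')) y
      = pdx i ρ₂ y / (2 * Real.sqrt (ρ₂ y)) := fun y hy i =>
    pdx_sqrt (diffAt_of_contDiffOn hSopen hρ₂s hy) (hρ₂pos y hy).ne' i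
  -- derivative of ρ₁ via the constraint
  have hdρ₁ : ∀ y ∈ S, ∀ i, pdx i ρ₁ y
      = (1 / 2 + Real.cos (η y) / 2) * pdx i ρ y
        - (ρ y * Real.sin (η y) / 2) * pdx i η y := by
    intro y hy i
    have hηd := diffAt_of_contDiffOn hSopen hηs hy
    have hcosd : DifferentiableAt ℝ (fun y' => Real.cos (η y')) y := hηd.cos
    have hinner : DifferentiableAt ℝ (fun y' => 1 / 2 + Real.cos (η y') / 2) y := by
      fun_prop
    have h1 : pdx i ρ₁ y = pdx i (fun y' => ρ y' * (1 / 2 + Real.cos (η y') / 2)) y :=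
      pdx_congr hSopen hρ₁eq hy i
    have h2 : pdx i (fun y' => 1 / 2 + Real.cos (η y') / 2) y
        = -Real.sin (η y) * pdx i η y / 2 := by
      have hdivd : DifferentiableAt ℝ (fun y' => Real.cos (η y') / 2) y := by fun_prop
      rw [pdx_const_add ((1:ℝ)/2) hdivd i, pdx_div_const hcosd 2 i, pdx_cos hηd i]
    rw [h1, pdx_mul (diffAt_of_contDiffOn hSopen hρs hy) hinner i, h2]
    ring
  -- key identity : ρ ∂η = 2(√ρ₁ ∂√ρ₂ - √ρ₂ ∂√ρ₁)
  have hkey : ∀ y ∈ S, ∀ i, ρ y * pdx i η y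
      = 2 * (Real.sqrt (ρ₁ y) * pdx i (fun y' => Real.sqrt (ρ₂ y')) y
          - Real.sqrt (ρ₂ y) * pdx i (fun y' => Real.sqrt (ρ₁ y')) y) := by
    intro y hy i
    have e1 : Real.sqrt (ρ₁ y) ^ 2 = ρ₁ y := Real.sq_sqrt (hρ₁pos y hy).le
    have e2 : Real.sqrt (ρ₂ y) ^ 2 = ρ₂ y := Real.sq_sqrt (hρ₂pos y hy).le
    have hs1 : Real.sqrt (ρ₁ y) ≠ 0 := (Real.sqrt_pos.2 (hρ₁pos y hy)).ne'
    have hs2 : Real.sqrt (ρ₂ y) ≠ 0 := (Real.sqrt_pos.2 (hρ₂pos y hy)).ne'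
    have hc : Real.sqrt (ρ₁ y) * Real.sqrt (ρ₂ y) ≠ 0 := mul_ne_zero hs1 hs2
    have hdρ₂i : pdx i ρ₂ y = pdx i ρ y - pdx i ρ₁ y := by
      rw [hdρ y hy i]; ring
    have hmain : ρ y * Real.sin (η y) / 2 * (ρ y * pdx i η y)
        = ρ₁ y * pdx i ρ₂ y - ρ₂ y * pdx i ρ₁ y := by
      rw [hdρ₂i, hdρ₁ y hy i, hρ₂val y hy, hρ₁eq hy]
      ring
    apply mul_left_cancel₀ hc
    calc Real.sqrt (ρ₁ y) * Real.sqrt (ρ₂ y) * (ρ y * pdx i η y)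
        = ρ y * Real.sin (η y) / 2 * (ρ y * pdx i η y) := by rw [hF2 y hy]
      _ = ρ₁ y * pdx i ρ₂ y - ρ₂ y * pdx i ρ₁ y := hmain
      _ = Real.sqrt (ρ₁ y) * Real.sqrt (ρ₂ y)
            * (2 * (Real.sqrt (ρ₁ y) * pdx i (fun y' => Real.sqrt (ρ₂ y')) y
              - Real.sqrt (ρ₂ y) * pdx i (fun y' => Real.sqrt (ρ₁ y')) y)) := by
          rw [hdR₁ y hy i, hdR₂ y hy i, show ρ₁ y = Real.sqrt (ρ₁ y) ^ 2 from e1.symm,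
            show ρ₂ y = Real.sqrt (ρ₂ y) ^ 2 from e2.symm]
          rw [Real.sqrt_sq (Real.sqrt_nonneg (ρ₁ y)), Real.sqrt_sq (Real.sqrt_nonneg (ρ₂ y))]
          field_simp
  -- divergence identity
  have hL : divx (fun y i => ρ y * pdx i η y) p
      = 2 * (Real.sqrt (ρ₁ p) * lapx (fun y => Real.sqrt (ρ₂ y)) p
          - Real.sqrt (ρ₂ p) * lapx (fun y => Real.sqrt (ρ₁ y)) p) := by
    have hterm : ∀ i, pdx i (fun y => ρ y * pdx i η y) p
        = 2 * (Real.sqrt (ρ₁ p) * pdx i (fun y => pdx i (fun y' => Real.sqrt (ρ₂ y')) y) p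
            - Real.sqrt (ρ₂ p) * pdx i (fun y => pdx i (fun y' => Real.sqrt (ρ₁ y')) y) p) := by
      intro i
      have hcongr : pdx i (fun y => ρ y * pdx i η y) p
          = pdx i (fun y => 2 * (Real.sqrt (ρ₁ y) * pdx i (fun y' => Real.sqrt (ρ₂ y')) y
              - Real.sqrt (ρ₂ y) * pdx i (fun y' => Real.sqrt (ρ₁ y')) y)) p :=
        pdx_congr hSopen (fun y hy => hkey y hy i) hp i
      have dR₁ := diffAt_of_contDiffOn hSopen hR₁s hp
      have dR₂ := diffAt_of_contDiffOn hSopen hR₂s hp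
      have dpR₁ : DifferentiableAt ℝ (fun y => pdx i (fun y' => Real.sqrt (ρ₁ y')) y) p :=
        diffAt_of_contDiffOn hSopen (pdx_smooth hSopen hR₁s i) hp
      have dpR₂ : DifferentiableAt ℝ (fun y => pdx i (fun y' => Real.sqrt (ρ₂ y')) y) p :=
        diffAt_of_contDiffOn hSopen (pdx_smooth hSopen hR₂s i) hp
      rw [hcongr, pdx_const_mul 2 (f := fun y => Real.sqrt (ρ₁ y) * pdx i (fun y' => Real.sqrt (ρ₂ y')) y
            - Real.sqrt (ρ₂ y) * pdx i (fun y' => Real.sqrt (ρ₁ y')) y) ((dR₁.mul dpR₂).sub (dR₂.mul dpR₁)) i,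
        pdx_sub (f := fun y => Real.sqrt (ρ₁ y) * pdx i (fun y' => Real.sqrt (ρ₂ y')) y)
          (g := fun y => Real.sqrt (ρ₂ y) * pdx i (fun y' => Real.sqrt (ρ₁ y')) y) (dR₁.mul dpR₂) (dR₂.mul dpR₁) i, pdx_mul dR₁ dpR₂ i, pdx_mul dR₂ dpR₁ i]
      ring
    show (∑ i, pdx i (fun y => ρ y * pdx i η y) p) = _
    rw [Finset.sum_congr rfl fun i _ => hterm i]
    simp only [lapx, Fin.sum_univ_three]
    ring
  -- time derivative of φ
  have hpdtφ : pdt φ p = (pdt θ₂ p - pdt θ₁ p) / hbar := by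
    rw [hφ]
    exact pdt_sub_div (diffAt_of_contDiffOn hSopen hθ₂s hp)
      (diffAt_of_contDiffOn hSopen hθ₁s hp) hbar
  -- spatial derivative of φ
  have hdφ : ∀ i, pdx i φ p = (pdx i θ₂ p - pdx i θ₁ p) / hbar := by
    intro i
    rw [hφ, pdx_div_const (f := fun y => θ₂ y - θ₁ y) ((diffAt_of_contDiffOn hSopen hθ₂s hp).sub
        (diffAt_of_contDiffOn hSopen hθ₁s hp)) hbar i,
      pdx_sub (diffAt_of_contDiffOn hSopen hθ₂s hp)
        (diffAt_of_contDiffOn hSopen hθ₁s hp) i]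
  -- kinetic identity
  have hkin : (∑ i, u p i * pdx i φ p)
      = ((∑ i, (pdx i θ₂ p - q * A p i) ^ 2) - (∑ i, (pdx i θ₁ p - q * A p i) ^ 2))
          / (2 * m * hbar)
        - hbar / (2 * m) * Real.cos (η p) * (∑ i, (pdx i φ p) ^ 2) := by
    have hρpne := (hρpos p hp).ne'
    have hcp : Real.cos (η p) = (ρ₁ p - ρ₂ p) / ρ p := by
      rw [hF1 p hp]; field_simp
    have hρp' : ρ p = ρ₁ p + ρ₂ p := by rw [hρ]
    simp only [Fin.sum_univ_three, hu, hdφ, hcp, hρp']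
    have h12 : ρ₁ p + ρ₂ p ≠ 0 := by rw [← hρp']; exact hρpne
    field_simp
    ring
  -- final assembly
  have hs1 : Real.sqrt (ρ₁ p) ≠ 0 := (Real.sqrt_pos.2 (hρ₁pos p hp)).ne'
  have hs2 : Real.sqrt (ρ₂ p) ≠ 0 := (Real.sqrt_pos.2 (hρ₂pos p hp)).ne'
  have hsn : Real.sin (η p) ≠ 0 := (hsinpos p hp).ne'
  have hρpne : ρ p ≠ 0 := (hρpos p hp).ne'
  have hsqrt12 : Real.sqrt (ρ₁ p / ρ₂ p) = Real.sqrt (ρ₁ p) / Real.sqrt (ρ₂ p) :=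
    Real.sqrt_div (hρ₁pos p hp).le _
  have hsqrt21 : Real.sqrt (ρ₂ p / ρ₁ p) = Real.sqrt (ρ₂ p) / Real.sqrt (ρ₁ p) :=
    Real.sqrt_div (hρ₂pos p hp).le _
  have e1 : Real.sqrt (ρ₁ p) ^ 2 = ρ₁ p := Real.sq_sqrt (hρ₁pos p hp).le
  have e2 : Real.sqrt (ρ₂ p) ^ 2 = ρ₂ p := Real.sq_sqrt (hρ₂pos p hp).le
  have hF1p := hF1 p hp
  have hF2p := hF2 p hp
  have hcs : Real.cos (η p) = (Real.sqrt (ρ₁ p) ^ 2 - Real.sqrt (ρ₂ p) ^ 2) / ρ p := by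
    rw [e1, e2]
    field_simp
    linarith [hF1p]
  have hsne : Real.sin (η p) = 2 * (Real.sqrt (ρ₁ p) * Real.sqrt (ρ₂ p)) / ρ p := by
    field_simp
    linarith [hF2p]
  rw [hpdtφ, h1 p hp, h2 p hp, hkin, hL]
  simp only [hVq1, hVq2, hsqrt12, hsqrt21]
  rw [hcs, hsne]
  field_simp
  ring

end
end
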